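/- Let u be a real-analytic solution of the heat equation 4 u_t = u_{xx} in a domain D of the (x,t)-plane. If u is not identically zero, then the points (x₀,t₀) ∈ D at which x ↦ u(x,t₀) has a zero of multiplicity ≥ 2 (i.e., u(x₀,t₀) = 0 and u_x(x₀,t₀) = 0) cannot form a real-analytic curve x = g(t) along which the multiplicity of the zero of x ↦ u(x,t) is a constant m ≥ 2. More precisely: if u(x,t) = (x-g(t))^m v(x,t) near (g(t₀),t₀) with m ≥ 2, g real-analytic, v real-analytic, and v(g(t₀),t₀) ≠ 0, then u cannot satisfy the heat equation. -/

import Mathlib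

open Filter

/-- A temperature cannot have a non-isolated zero of constant multiplicity
`m ≥ 2` along a real-analytic curve: if `u(x,t) = (x-g(t))^m v(x,t)` near
`(g(t₀), t₀)` with `v(g(t₀),t₀) ≠ 0`, then `u` cannot satisfy the heat
equation `4 u_t = u_{xx}` near that point. -/
theorem no_multiple_zero_curve_for_temperature
    (u v : ℝ → ℝ → ℝ) (g : ℝ → ℝ) (m : ℕ) (hm : 2 ≤ m) (t₀ : ℝ)
    (hg : AnalyticAt ℝ g t₀)
    (hv : AnalyticAt ℝ (fun p : ℝ × ℝ => v p.1 p.2) (g t₀, t₀))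
    (hvne : v (g t₀) t₀ ≠ 0)
    (hfact : ∀ᶠ p : ℝ × ℝ in nhds (g t₀, t₀),
      u p.1 p.2 = (p.1 - g p.2) ^ m * v p.1 p.2) :
    ¬ (∀ᶠ p : ℝ × ℝ in nhds (g t₀, t₀),
        4 * deriv (fun t => u p.1 t) p.2 = deriv (deriv (fun x => u x p.2)) p.1) := by
  intro hheat
  obtain ⟨k, rfl⟩ := Nat.exists_eq_add_of_le hm
  set f : ℝ × ℝ → ℝ := fun p => v p.1 p.2 with hfdef
  have hall : ∀ᶠ p : ℝ × ℝ in nhds (g t₀, t₀),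
      (u p.1 p.2 = (p.1 - g p.2) ^ (2 + k) * v p.1 p.2 ∧
        4 * deriv (fun t => u p.1 t) p.2 = deriv (deriv (fun x => u x p.2)) p.1) ∧
      AnalyticAt ℝ f p := (hfact.and hheat).and hv.eventually_analyticAt
  obtain ⟨U, hUsub, hUo, hUmem⟩ := eventually_nhds_iff.mp hall
  set I : Set ℝ := (fun x => (x, t₀)) ⁻¹' U with hIdef
  have hIo : IsOpen I := hUo.preimage (continuous_id.prodMk continuous_const)
  have haI : g t₀ ∈ I := hUmem
  set V : ℝ → ℝ := fun x => v x t₀ with hVdef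
  have hVan : AnalyticOnNhd ℝ V I := by
    intro x hx
    exact AnalyticAt.comp₂ ((hUsub _ hx).2) analyticAt_id analyticAt_const
  have hV'an : AnalyticOnNhd ℝ (deriv V) I := hVan.deriv
  have hV''an : AnalyticOnNhd ℝ (deriv (deriv V)) I := hV'an.deriv
  set vt : ℝ → ℝ := fun x => fderiv ℝ f (x, t₀) ((0 : ℝ), (1 : ℝ)) with hvtdef
  -- time derivative formula
  have hut : ∀ x ∈ I, deriv (fun t => u x t) t₀ =
      ((2 + k : ℕ) : ℝ) * (x - g t₀) ^ (2 + k - 1) * -(deriv g t₀) * V x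
        + (x - g t₀) ^ (2 + k) * vt x := by
    intro x hx
    have hev : (fun t => u x t) =ᶠ[nhds t₀] fun t => (x - g t) ^ (2 + k) * f (x, t) := by
      have hc : ContinuousAt (fun t : ℝ => ((x : ℝ), t)) t₀ :=
        (continuous_const.prodMk continuous_id).continuousAt
      filter_upwards [hc (hUo.mem_nhds hx)] with t ht
      exact (hUsub _ ht).1.1
    have h1 : HasDerivAt (fun t => (x - g t) ^ (2 + k))
        (((2 + k : ℕ) : ℝ) * (x - g t₀) ^ (2 + k - 1) * -(deriv g t₀)) t₀ :=
      (hg.differentiableAt.hasDerivAt.const_sub x).pow (2 + k)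
    have h2 : HasDerivAt (fun t => f (x, t)) (vt x) t₀ := by
      have hd : HasFDerivAt f (fderiv ℝ f (x, t₀)) (x, t₀) :=
        ((hUsub _ hx).2).differentiableAt.hasFDerivAt
      have hp : HasDerivAt (fun t : ℝ => ((x : ℝ), t)) ((0 : ℝ), (1 : ℝ)) t₀ :=
        (hasDerivAt_const t₀ x).prodMk (hasDerivAt_id t₀)
      exact hd.comp_hasDerivAt t₀ hp
    rw [hev.deriv_eq]
    exact (h1.mul h2).deriv
  -- first space derivative formula
  have hd1 : ∀ y ∈ I, deriv (fun z => u z t₀) y =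
      ((2 + k : ℕ) : ℝ) * (y - g t₀) ^ (2 + k - 1) * 1 * V y
        + (y - g t₀) ^ (2 + k) * deriv V y := by
    intro y hy
    have hev : (fun z => u z t₀) =ᶠ[nhds y] fun z => (z - g t₀) ^ (2 + k) * V z := by
      filter_upwards [hIo.mem_nhds hy] with z hz
      exact (hUsub _ hz).1.1
    rw [hev.deriv_eq]
    exact ((((hasDerivAt_id' (x := y))).sub_const (g t₀)).pow (2 + k)).mul
      ((hVan y hy).differentiableAt.hasDerivAt) |>.deriv
  -- second space derivative formula
  have hd2 : ∀ x ∈ I, deriv (deriv (fun z => u z t₀)) x =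
      (((2 + k : ℕ) : ℝ) * (((2 + k - 1 : ℕ) : ℝ) * (x - g t₀) ^ (2 + k - 1 - 1) * 1) * 1)
          * V x
        + ((2 + k : ℕ) : ℝ) * (x - g t₀) ^ (2 + k - 1) * 1 * deriv V x
        + ((((2 + k : ℕ) : ℝ) * (x - g t₀) ^ (2 + k - 1) * 1) * deriv V x
            + (x - g t₀) ^ (2 + k) * deriv (deriv V) x) := by
    intro x hx
    have hev : (deriv (fun z => u z t₀)) =ᶠ[nhds x]
        fun y => ((2 + k : ℕ) : ℝ) * (y - g t₀) ^ (2 + k - 1) * 1 * V y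
          + (y - g t₀) ^ (2 + k) * deriv V y := by
      filter_upwards [hIo.mem_nhds hx] with y hy
      exact hd1 y hy
    rw [hev.deriv_eq]
    have hA : HasDerivAt (fun y : ℝ => ((2 + k : ℕ) : ℝ) * (y - g t₀) ^ (2 + k - 1) * 1)
        (((2 + k : ℕ) : ℝ) * (((2 + k - 1 : ℕ) : ℝ) * (x - g t₀) ^ (2 + k - 1 - 1) * 1) * 1)
        x :=
      ((((hasDerivAt_id' (x := x)).sub_const (g t₀)).pow (2 + k - 1)).const_mul
        (((2 + k : ℕ) : ℝ))).mul_const 1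
    have hB : HasDerivAt (fun y : ℝ => (y - g t₀) ^ (2 + k) * deriv V y)
        ((((2 + k : ℕ) : ℝ) * (x - g t₀) ^ (2 + k - 1) * 1) * deriv V x
          + (x - g t₀) ^ (2 + k) * deriv (deriv V) x) x :=
      (((hasDerivAt_id' (x := x)).sub_const (g t₀)).pow (2 + k)).mul
        ((hV'an x hx).differentiableAt.hasDerivAt)
    exact ((hA.mul ((hVan x hx).differentiableAt.hasDerivAt)).add hB).deriv
  -- the key pointwise identity away from the curve
  have key : ∀ x ∈ I, x ≠ g t₀ →
      ((k : ℝ) + 2) * ((k : ℝ) + 1) * V x =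
        (x - g t₀) * (-4 * ((k : ℝ) + 2) * deriv g t₀ * V x + 4 * (x - g t₀) * vt x
          - 2 * ((k : ℝ) + 2) * deriv V x - (x - g t₀) * deriv (deriv V) x) := by
    intro x hx hxne
    have hs : x - g t₀ ≠ 0 := sub_ne_zero.mpr hxne
    have E := (hUsub _ hx).1.2
    rw [hut x hx, hd2 x hx] at E
    have e1 : 2 + k - 1 = k + 1 := by omega
    have e2 : 2 + k - 1 - 1 = k := by omega
    rw [e2, e1] at E
    have hpk : (x - g t₀) ^ k ≠ 0 := pow_ne_zero _ hs
    apply mul_left_cancel₀ hpk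
    push_cast at E ⊢
    ring_nf at E ⊢
    linarith [E]
  -- continuity at g t₀ of all the ingredients
  have hVc : ContinuousAt V (g t₀) := (hVan _ haI).continuousAt
  have hV'c : ContinuousAt (deriv V) (g t₀) := (hV'an _ haI).continuousAt
  have hV''c : ContinuousAt (deriv (deriv V)) (g t₀) := (hV''an _ haI).continuousAt
  have hvtc : ContinuousAt vt (g t₀) := by
    have h1 : ContinuousAt (fun x : ℝ => fderiv ℝ f (x, t₀)) (g t₀) :=
      ContinuousAt.comp' (hv.fderiv.continuousAt)
        ((continuous_id.prodMk continuous_const).continuousAt)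
    exact ContinuousAt.comp'
      ((ContinuousLinearMap.apply ℝ ℝ ((0 : ℝ), (1 : ℝ))).continuous.continuousAt) h1
  -- take limits along x → g t₀, x ≠ g t₀
  have hne : (nhdsWithin (g t₀) {g t₀}ᶜ).NeBot := by infer_instance
  have hevkey : ∀ᶠ x in nhdsWithin (g t₀) {g t₀}ᶜ,
      ((k : ℝ) + 2) * ((k : ℝ) + 1) * V x =
        (x - g t₀) * (-4 * ((k : ℝ) + 2) * deriv g t₀ * V x + 4 * (x - g t₀) * vt x
          - 2 * ((k : ℝ) + 2) * deriv V x - (x - g t₀) * deriv (deriv V) x) := by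
    filter_upwards [nhdsWithin_le_nhds (hIo.mem_nhds haI), self_mem_nhdsWithin] with x hx hx'
    exact key x hx hx'
  have l1 : Tendsto (fun x => ((k : ℝ) + 2) * ((k : ℝ) + 1) * V x)
      (nhdsWithin (g t₀) {g t₀}ᶜ) (nhds (((k : ℝ) + 2) * ((k : ℝ) + 1) * V (g t₀))) :=
    Tendsto.mono_left (Tendsto.const_mul _ hVc) nhdsWithin_le_nhds
  have l2 : Tendsto (fun x => (x - g t₀) * (-4 * ((k : ℝ) + 2) * deriv g t₀ * V x
        + 4 * (x - g t₀) * vt x - 2 * ((k : ℝ) + 2) * deriv V x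
        - (x - g t₀) * deriv (deriv V) x))
      (nhdsWithin (g t₀) {g t₀}ᶜ) (nhds 0) := by
    have hΦ : ContinuousAt (fun x => (x - g t₀) * (-4 * ((k : ℝ) + 2) * deriv g t₀ * V x
        + 4 * (x - g t₀) * vt x - 2 * ((k : ℝ) + 2) * deriv V x
        - (x - g t₀) * deriv (deriv V) x)) (g t₀) := by
      fun_prop
    have : (g t₀ - g t₀) * (-4 * ((k : ℝ) + 2) * deriv g t₀ * V (g t₀)
        + 4 * (g t₀ - g t₀) * vt (g t₀) - 2 * ((k : ℝ) + 2) * deriv V (g t₀)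
        - (g t₀ - g t₀) * deriv (deriv V) (g t₀)) = 0 := by ring
    rw [← this]
    exact Tendsto.mono_left hΦ nhdsWithin_le_nhds
  have hzero : ((k : ℝ) + 2) * ((k : ℝ) + 1) * V (g t₀) = 0 :=
    tendsto_nhds_unique (l1.congr' hevkey) l2
  have hVne : V (g t₀) ≠ 0 := hvne
  have hpos : (0 : ℝ) < ((k : ℝ) + 2) * ((k : ℝ) + 1) := by positivity
  exact hVne (by
    rcases mul_eq_zero.mp hzero with h | h
    · exact absurd h (ne_of_gt hpos)
    · exact h)
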